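/- For all parameters A, B, C ∈ ℂ with C ≠ 1 and (C;q)_n ≠ 0 for all n, and all x, y ∈ ℂ with |x| < 1 and |y| < 1, the bibasic Humbert function satisfies Φ₁(A,q₁B;C;q,q₁;x,y) = Φ₁(A,B;C;q,q₁;q₁x,y) + (x(1−A)/(1−C))·Φ₁(qA,q₁B;qC;q,q₁;x,y). (Equation (2.12).) -/

import Mathlib

open Complex

/-- The q-shifted factorial (z;q)_n = prod_{r=0}^{n-1} (1 - z q^r). -/
noncomputable def qPoch (q z : ℂ) (n : ℕ) : ℂ :=
  ∏ r ∈ Finset.range n, (1 - z * q ^ r)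

/-- The bibasic Humbert hypergeometric function Φ₁ on two independent bases q and q₁. -/
noncomputable def Phi1 (q q1 A B C x y : ℂ) : ℂ :=
  ∑' p : ℕ × ℕ,
    qPoch q A (p.1 + p.2) * qPoch q1 B p.1 /
      (qPoch q C (p.1 + p.2) * qPoch q1 q1 p.1 * qPoch q q p.2) * x ^ p.1 * y ^ p.2

/-- The Jackson p-derivative. -/
noncomputable def jackson (p : ℂ) (f : ℂ → ℂ) (x : ℂ) : ℂ :=
  (f x - f (p * x)) / ((1 - p) * x)

lemma qPoch_succ (q z : ℂ) (n : ℕ) : qPoch q z (n + 1) = qPoch q z n * (1 - z * q ^ n) :=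
  Finset.prod_range_succ _ _

lemma qPoch_succ' (q z : ℂ) (n : ℕ) : qPoch q z (n + 1) = (1 - z) * qPoch q (q * z) n := by
  rw [qPoch, Finset.prod_range_succ', qPoch, mul_comm]
  simp only [pow_zero, mul_one]
  congr 1
  refine Finset.prod_congr rfl fun r _ => ?_
  ring

lemma qPoch_self_ne_zero (q : ℂ) (hq : ‖q‖ < 1) (n : ℕ) : qPoch q q n ≠ 0 := by
  rw [qPoch]
  apply Finset.prod_ne_zero_iff.mpr
  intro r _ h
  have h2 : q * q ^ r = 1 := by linear_combination -h
  have h3 : ‖q * q ^ r‖ < 1 := by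
    rw [norm_mul, norm_pow]
    have hp := pow_le_one₀ (norm_nonneg q) hq.le (n := r)
    nlinarith [norm_nonneg q]
  rw [h2] at h3
  simp at h3

lemma qPoch_abs_le (q z : ℂ) (hq : ‖q‖ < 1) (n : ℕ) :
    ‖qPoch q z n‖ ≤ Real.exp (‖z‖ * (1 - ‖q‖)⁻¹) := by
  have h01 : (0:ℝ) < 1 - ‖q‖ := by linarith
  rw [qPoch, norm_prod]
  calc ∏ r ∈ Finset.range n, ‖1 - z * q ^ r‖
      ≤ ∏ r ∈ Finset.range n, Real.exp (‖z‖ * ‖q‖ ^ r) := by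
        apply Finset.prod_le_prod (fun r _ => norm_nonneg _)
        intro r _
        have h1 : ‖1 - z * q ^ r‖ ≤ 1 + ‖z‖ * ‖q‖ ^ r := by
          have := norm_sub_le (1:ℂ) (z * q ^ r)
          simpa [norm_mul, norm_pow] using this
        have h2 := Real.add_one_le_exp (‖z‖ * ‖q‖ ^ r)
        linarith
    _ = Real.exp (∑ r ∈ Finset.range n, ‖z‖ * ‖q‖ ^ r) :=
        (Real.exp_sum _ _).symm
    _ ≤ Real.exp (‖z‖ * (1 - ‖q‖)⁻¹) := by
        apply Real.exp_le_exp.mpr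
        rw [← Finset.mul_sum]
        have hgeom : ∑ r ∈ Finset.range n, ‖q‖ ^ r ≤ (1 - ‖q‖)⁻¹ := by
          have hs := summable_geometric_of_lt_one (norm_nonneg q) hq
          have := Summable.sum_le_tsum (Finset.range n)
            (fun i _ => pow_nonneg (norm_nonneg q) i) hs
          rwa [tsum_geometric_of_lt_one (norm_nonneg q) hq] at this
        nlinarith [norm_nonneg z, hgeom,
          mul_le_mul_of_nonneg_left hgeom (norm_nonneg z)]

lemma prod_one_sub_ge (t : ℕ → ℝ) (h0 : ∀ r, 0 ≤ t r) (h1 : ∀ r, t r ≤ 1) (m : ℕ) :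
    1 - ∑ r ∈ Finset.range m, t r ≤ ∏ r ∈ Finset.range m, (1 - t r) := by
  induction m with
  | zero => simp
  | succ m ih =>
    rw [Finset.prod_range_succ, Finset.sum_range_succ]
    have hprodnn : (0:ℝ) ≤ ∏ r ∈ Finset.range m, (1 - t r) :=
      Finset.prod_nonneg fun r _ => by linarith [h1 r]
    have hsnn : (0:ℝ) ≤ ∑ r ∈ Finset.range m, t r :=
      Finset.sum_nonneg fun r _ => h0 r
    have := mul_le_mul_of_nonneg_right ih (by linarith [h1 m] : (0:ℝ) ≤ 1 - t m)
    nlinarith [h0 m, hsnn]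

open Filter in
lemma qPoch_abs_lower (q C : ℂ) (hq : ‖q‖ < 1) (hC : ∀ n, qPoch q C n ≠ 0) :
    ∃ δ : ℝ, 0 < δ ∧ ∀ n, δ ≤ ‖qPoch q C n‖ := by
  have h0q : 0 ≤ ‖q‖ := norm_nonneg q
  have h01 : (0:ℝ) < 1 - ‖q‖ := by linarith
  -- choose N with |C| |q|^N / (1-|q|) ≤ 1/2
  have hlim : Tendsto (fun N : ℕ => ‖C‖ * ‖q‖ ^ N / (1 - ‖q‖))
      atTop (nhds 0) := by
    have := (tendsto_pow_atTop_nhds_zero_of_lt_one h0q hq).const_mul (‖C‖)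
    simpa [div_eq_mul_inv, mul_assoc] using this.mul_const (1 - ‖q‖)⁻¹
  obtain ⟨N, hN⟩ := (hlim.eventually (eventually_le_nhds (by norm_num : (0:ℝ) < 1/2))).exists
  -- bound on each tail term
  have hterm : ∀ r, ‖C‖ * ‖q‖ ^ (N + r) ≤ 1/2 := by
    intro r
    have h1 : ‖q‖ ^ (N + r) ≤ ‖q‖ ^ N :=
      pow_le_pow_of_le_one h0q hq.le (Nat.le_add_right _ _)
    have h2 : ‖C‖ * ‖q‖ ^ N ≤
        ‖C‖ * ‖q‖ ^ N / (1 - ‖q‖) := by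
      rw [le_div_iff₀ h01]
      nlinarith [mul_nonneg (mul_nonneg (norm_nonneg C) (pow_nonneg h0q N)) h0q]
    nlinarith [norm_nonneg C, pow_nonneg h0q N, pow_nonneg h0q (N + r)]
  -- tail product bound
  have tail : ∀ m : ℕ, (1/2 : ℝ) ≤ ∏ r ∈ Finset.range m, ‖1 - C * q ^ (N + r)‖ := by
    intro m
    have hsum : ∑ r ∈ Finset.range m, ‖C‖ * ‖q‖ ^ (N + r) ≤ 1/2 := by
      have : ∀ r ∈ Finset.range m, ‖C‖ * ‖q‖ ^ (N + r)
          = (‖C‖ * ‖q‖ ^ N) * ‖q‖ ^ r := by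
        intro r _; rw [pow_add]; ring
      rw [Finset.sum_congr rfl this, ← Finset.mul_sum]
      have hgeom : ∑ r ∈ Finset.range m, ‖q‖ ^ r ≤ (1 - ‖q‖)⁻¹ := by
        have hs := summable_geometric_of_lt_one h0q hq
        have := Summable.sum_le_tsum (Finset.range m) (fun i _ => pow_nonneg h0q i) hs
        rwa [tsum_geometric_of_lt_one h0q hq] at this
      have hCN : 0 ≤ ‖C‖ * ‖q‖ ^ N :=
        mul_nonneg (norm_nonneg C) (pow_nonneg h0q N)
      calc ‖C‖ * ‖q‖ ^ N * ∑ r ∈ Finset.range m, ‖q‖ ^ r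
          ≤ ‖C‖ * ‖q‖ ^ N * (1 - ‖q‖)⁻¹ := by
            exact mul_le_mul_of_nonneg_left hgeom hCN
        _ ≤ 1/2 := by rw [← div_eq_mul_inv]; exact hN
    calc (1/2 : ℝ) ≤ 1 - ∑ r ∈ Finset.range m, ‖C‖ * ‖q‖ ^ (N + r) := by
          linarith
      _ ≤ ∏ r ∈ Finset.range m, (1 - ‖C‖ * ‖q‖ ^ (N + r)) :=
          prod_one_sub_ge _ (fun r => mul_nonneg (norm_nonneg C) (pow_nonneg h0q _))
            (fun r => by linarith [hterm r]) m
      _ ≤ ∏ r ∈ Finset.range m, ‖1 - C * q ^ (N + r)‖ := by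
          apply Finset.prod_le_prod (fun r _ => by linarith [hterm r])
          intro r _
          have := norm_sub_norm_le (1 : ℂ) (C * q ^ (N + r))
          simpa [norm_mul, norm_pow] using this
  -- min over first N+1 values
  have hne : (Finset.range (N + 1)).Nonempty := ⟨0, by simp⟩
  set δ0 := (Finset.range (N + 1)).inf' hne (fun n => ‖qPoch q C n‖) with hδ0
  have hδ0pos : 0 < δ0 := by
    rw [hδ0, Finset.lt_inf'_iff]
    intro i _
    exact norm_pos_iff.mpr (hC i)
  refine ⟨δ0 / 2, by linarith, ?_⟩
  intro n
  by_cases hn : n ≤ N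
  · have := Finset.inf'_le (fun n => ‖qPoch q C n‖)
      (Finset.mem_range.mpr (show n < N + 1 by omega))
    linarith
  · have hsplit : n = N + (n - N) := by omega
    rw [hsplit, qPoch, Finset.prod_range_add, norm_mul]
    have h1 : δ0 ≤ ‖∏ r ∈ Finset.range N, (1 - C * q ^ r)‖ := by
      have := Finset.inf'_le (fun n => ‖qPoch q C n‖)
        (Finset.mem_range.mpr (show N < N + 1 by omega))
      rw [qPoch] at this
      exact this
    have h2 : (1/2 : ℝ) ≤ ‖∏ r ∈ Finset.range (n - N), (1 - C * q ^ (N + r))‖ := by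
      rw [norm_prod]; exact tail (n - N)
    nlinarith [norm_nonneg (∏ r ∈ Finset.range (n - N), (1 - C * q ^ (N + r)))]

lemma summable_term (q q1 A B C x y : ℂ) (hq : ‖q‖ < 1) (hq1 : ‖q1‖ < 1)
    (hC : ∀ n, qPoch q C n ≠ 0) (hx : ‖x‖ < 1) (hy : ‖y‖ < 1) :
    Summable (fun p : ℕ × ℕ =>
      qPoch q A (p.1 + p.2) * qPoch q1 B p.1 /
        (qPoch q C (p.1 + p.2) * qPoch q1 q1 p.1 * qPoch q q p.2) * x ^ p.1 * y ^ p.2) := by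
  obtain ⟨δC, hδC, hCb⟩ := qPoch_abs_lower q C hq hC
  obtain ⟨δ1, hδ1, h1b⟩ := qPoch_abs_lower q1 q1 hq1 (qPoch_self_ne_zero q1 hq1)
  obtain ⟨δ2, hδ2, h2b⟩ := qPoch_abs_lower q q hq (qPoch_self_ne_zero q hq)
  set MA := Real.exp (‖A‖ * (1 - ‖q‖)⁻¹) with hMA
  set MB := Real.exp (‖B‖ * (1 - ‖q1‖)⁻¹) with hMB
  have hMApos : 0 < MA := Real.exp_pos _
  have hMBpos : 0 < MB := Real.exp_pos _
  apply Summable.of_norm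
  have hsum : Summable (fun p : ℕ × ℕ =>
      (MA * MB / (δC * δ1 * δ2)) * (‖x‖ ^ p.1 * ‖y‖ ^ p.2)) := by
    apply Summable.mul_left
    exact (summable_geometric_of_lt_one (norm_nonneg x) hx).mul_of_nonneg
      (summable_geometric_of_lt_one (norm_nonneg y) hy)
      (fun ℓ => pow_nonneg (norm_nonneg x) ℓ)
      (fun k => pow_nonneg (norm_nonneg y) k)
  apply Summable.of_nonneg_of_le (fun p => norm_nonneg _) _ hsum
  intro p
  simp only [norm_mul, norm_div, norm_pow]
  have hfrac : ‖qPoch q A (p.1 + p.2)‖ * ‖qPoch q1 B p.1‖ /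
      (‖qPoch q C (p.1 + p.2)‖ * ‖qPoch q1 q1 p.1‖ *
        ‖qPoch q q p.2‖) ≤ MA * MB / (δC * δ1 * δ2) := by
    apply div_le_div₀ (le_of_lt (mul_pos hMApos hMBpos))
    · exact mul_le_mul (qPoch_abs_le q A hq _) (qPoch_abs_le q1 B hq1 _)
        (norm_nonneg _) hMApos.le
    · positivity
    · exact mul_le_mul (mul_le_mul (hCb _) (h1b _) hδ1.le (norm_nonneg _))
        (h2b _) hδ2.le (mul_nonneg (norm_nonneg _) (norm_nonneg _))
  calc ‖qPoch q A (p.1 + p.2)‖ * ‖qPoch q1 B p.1‖ /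
      (‖qPoch q C (p.1 + p.2)‖ * ‖qPoch q1 q1 p.1‖ *
        ‖qPoch q q p.2‖) * ‖x‖ ^ p.1 * ‖y‖ ^ p.2
      ≤ MA * MB / (δC * δ1 * δ2) * ‖x‖ ^ p.1 * ‖y‖ ^ p.2 := by
        have h1 : (0:ℝ) ≤ ‖x‖ ^ p.1 := pow_nonneg (norm_nonneg x) _
        have h2 : (0:ℝ) ≤ ‖y‖ ^ p.2 := pow_nonneg (norm_nonneg y) _
        exact mul_le_mul_of_nonneg_right (mul_le_mul_of_nonneg_right hfrac h1) h2
    _ = MA * MB / (δC * δ1 * δ2) * (‖x‖ ^ p.1 * ‖y‖ ^ p.2) := by ring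

lemma key_pointwise (q q1 A B C x y : ℂ) (hq : ‖q‖ < 1) (hq1 : ‖q1‖ < 1)
    (hC : ∀ n, qPoch q C n ≠ 0) (hC1 : C ≠ 1) (ℓ k : ℕ) :
    qPoch q A (ℓ + 1 + k) * qPoch q1 (q1 * B) (ℓ + 1) /
        (qPoch q C (ℓ + 1 + k) * qPoch q1 q1 (ℓ + 1) * qPoch q q k) * x ^ (ℓ + 1) * y ^ k
      - qPoch q A (ℓ + 1 + k) * qPoch q1 B (ℓ + 1) /
        (qPoch q C (ℓ + 1 + k) * qPoch q1 q1 (ℓ + 1) * qPoch q q k) * (q1 * x) ^ (ℓ + 1) * y ^ k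
      = x * (1 - A) / (1 - C) *
        (qPoch q (q * A) (ℓ + k) * qPoch q1 (q1 * B) ℓ /
          (qPoch q (q * C) (ℓ + k) * qPoch q1 q1 ℓ * qPoch q q k) * x ^ ℓ * y ^ k) := by
  have hadd : ℓ + 1 + k = (ℓ + k) + 1 := by omega
  have e1 : qPoch q A (ℓ + 1 + k) = (1 - A) * qPoch q (q * A) (ℓ + k) := by
    rw [hadd, qPoch_succ']
  have e2 : qPoch q C (ℓ + 1 + k) = (1 - C) * qPoch q (q * C) (ℓ + k) := by
    rw [hadd, qPoch_succ']
  have e3 : qPoch q1 q1 (ℓ + 1) = qPoch q1 q1 ℓ * (1 - q1 ^ (ℓ + 1)) := by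
    rw [qPoch_succ]; ring_nf
  have e4 : qPoch q1 (q1 * B) (ℓ + 1) = qPoch q1 (q1 * B) ℓ * (1 - q1 * B * q1 ^ ℓ) :=
    qPoch_succ _ _ _
  have e5 : qPoch q1 B (ℓ + 1) = (1 - B) * qPoch q1 (q1 * B) ℓ := qPoch_succ' _ _ _
  have h1C : (1 : ℂ) - C ≠ 0 := sub_ne_zero.mpr (Ne.symm hC1)
  have hqC : qPoch q (q * C) (ℓ + k) ≠ 0 := by
    intro h
    apply hC (ℓ + 1 + k)
    rw [e2, h, mul_zero]
  have hQ : qPoch q1 q1 ℓ ≠ 0 := qPoch_self_ne_zero q1 hq1 ℓ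
  have hR : qPoch q q k ≠ 0 := qPoch_self_ne_zero q hq k
  have hpow : (1 : ℂ) - q1 ^ (ℓ + 1) ≠ 0 := by
    intro h
    have h2 : q1 ^ (ℓ + 1) = 1 := by linear_combination -h
    have : ‖q1 ^ (ℓ + 1)‖ < 1 := by
      rw [norm_pow]
      exact pow_lt_one₀ (norm_nonneg q1) hq1 (Nat.succ_ne_zero ℓ)
    rw [h2] at this
    simp at this
  rw [e1, e2, e3, e4, e5]
  field_simp
  ring


theorem stmt11 (q q1 A B C x y : ℂ)
    (hq0 : 0 < ‖q‖) (hq1 : ‖q‖ < 1)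
    (hq10 : 0 < ‖q1‖) (hq11 : ‖q1‖ < 1)
    (hC : ∀ n : ℕ, qPoch q C n ≠ 0)
    (hC1 : C ≠ 1) (hx : ‖x‖ < 1) (hy : ‖y‖ < 1) :
    Phi1 q q1 A (q1 * B) C x y =
      Phi1 q q1 A B C (q1 * x) y
        + (x * (1 - A) / (1 - C)) * Phi1 q q1 (q * A) (q1 * B) (q * C) x y := by
  set F : ℕ × ℕ → ℂ := fun p =>
    qPoch q A (p.1 + p.2) * qPoch q1 (q1 * B) p.1 /
      (qPoch q C (p.1 + p.2) * qPoch q1 q1 p.1 * qPoch q q p.2) * x ^ p.1 * y ^ p.2 with hF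
  set G : ℕ × ℕ → ℂ := fun p =>
    qPoch q A (p.1 + p.2) * qPoch q1 B p.1 /
      (qPoch q C (p.1 + p.2) * qPoch q1 q1 p.1 * qPoch q q p.2) * (q1 * x) ^ p.1 * y ^ p.2
    with hG
  set H : ℕ × ℕ → ℂ := fun p =>
    qPoch q (q * A) (p.1 + p.2) * qPoch q1 (q1 * B) p.1 /
      (qPoch q (q * C) (p.1 + p.2) * qPoch q1 q1 p.1 * qPoch q q p.2) * x ^ p.1 * y ^ p.2
    with hH
  have hFs : Summable F := summable_term q q1 A (q1 * B) C x y hq1 hq11 hC hx hy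
  have hGs : Summable G := by
    apply summable_term q q1 A B C (q1 * x) y hq1 hq11 hC _ hy
    rw [norm_mul]
    calc ‖q1‖ * ‖x‖ ≤ 1 * ‖x‖ := by
          exact mul_le_mul_of_nonneg_right hq11.le (norm_nonneg x)
      _ < 1 := by simpa using hx
  -- reindexing map
  set e : ℕ × ℕ → ℕ × ℕ := fun p => (p.1 + 1, p.2) with he
  have hinj : Function.Injective e := by
    intro a b hab
    simp only [he, Prod.ext_iff] at hab ⊢
    omega
  have hsupp : Function.support (fun p => F p - G p) ⊆ Set.range e := by
    intro p hp
    by_contra hcon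
    apply hp
    have hp1 : p.1 = 0 := by
      by_contra h0
      exact hcon ⟨(p.1 - 1, p.2), by simp only [he]; ext <;> simp <;> omega⟩
    have : F p = G p := by
      simp only [hF, hG, hp1, pow_zero, qPoch, Finset.range_zero, Finset.prod_empty]
    simp [this]
  have hre : ∑' p : ℕ × ℕ, (F (e p) - G (e p)) = ∑' p : ℕ × ℕ, (F p - G p) :=
    hinj.tsum_eq hsupp
  have hkey : ∀ p : ℕ × ℕ, F (e p) - G (e p) = (x * (1 - A) / (1 - C)) * H p := by
    intro p
    exact key_pointwise q q1 A B C x y hq1 hq11 hC hC1 p.1 p.2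
  have hsub : Phi1 q q1 A (q1 * B) C x y - Phi1 q q1 A B C (q1 * x) y
      = ∑' p : ℕ × ℕ, (F p - G p) := (Summable.tsum_sub hFs hGs).symm
  have hrhs : ∑' p : ℕ × ℕ, (F p - G p) = (x * (1 - A) / (1 - C)) *
      Phi1 q q1 (q * A) (q1 * B) (q * C) x y := by
    rw [← hre]
    simp only [hkey]
    rw [tsum_mul_left]
    rfl
  have := hsub.trans hrhs
  linear_combination this
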